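/- For real numbers t, a, b, c, s, the symmetric matrix [[t, a, b], [a, t, c], [b, c, s]] is positive semidefinite if and only if there exist u, v ∈ ℝ with u + v = 2s such that [[t+a, b+c], [b+c, u]] and [[t−a, b−c], [b−c, v]] are both positive semidefinite. -/

import Mathlib

lemma psd2 (A B C : ℝ) : Matrix.PosSemidef !![A,B;B,C] ↔
    ∀ q z : ℝ, 0 ≤ A*q^2 + 2*B*q*z + C*z^2 := by
  constructor
  · intro h q z
    have := h.dotProduct_mulVec_nonneg ![q,z]
    simp [Matrix.mulVec, dotProduct, Fin.sum_univ_succ] at this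
    nlinarith [this]
  · intro h
    refine Matrix.PosSemidef.of_dotProduct_mulVec_nonneg ?_ ?_
    · ext i j; fin_cases i <;> fin_cases j <;> simp [Matrix.IsHermitian]
    · intro x
      have := h (x 0) (x 1)
      simp [Matrix.mulVec, dotProduct, Fin.sum_univ_succ]
      nlinarith [this]

lemma psd3 (t a b c s : ℝ) : Matrix.PosSemidef !![t,a,b;a,t,c;b,c,s] ↔
    ∀ x y z : ℝ, 0 ≤ t*x^2+t*y^2+s*z^2+2*a*x*y+2*b*x*z+2*c*y*z := by
  constructor
  · intro h x y z
    have := h.dotProduct_mulVec_nonneg ![x,y,z]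
    simp [Matrix.mulVec, dotProduct, Fin.sum_univ_succ] at this
    nlinarith [this]
  · intro h
    refine Matrix.PosSemidef.of_dotProduct_mulVec_nonneg ?_ ?_
    · ext i j; fin_cases i <;> fin_cases j <;> simp [Matrix.IsHermitian]
    · intro x
      have := h (x 0) (x 1) (x 2)
      simp [Matrix.mulVec, dotProduct, Fin.sum_univ_succ]
      nlinarith [this]

theorem slice_soc_rep (t a b c s : ℝ) :
    Matrix.PosSemidef !![t, a, b; a, t, c; b, c, s] ↔
      ∃ u v : ℝ, u + v = 2 * s ∧
        Matrix.PosSemidef !![t + a, b + c; b + c, u] ∧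
        Matrix.PosSemidef !![t - a, b - c; b - c, v] := by
  rw [psd3]
  constructor
  · intro hM
    have hta : 0 ≤ t + a := by nlinarith [hM 1 1 0]
    rcases eq_or_lt_of_le hta with h0 | hpos
    · -- t + a = 0
      have hbc : b + c = 0 := by
        by_contra hne
        set X := -(s+1)/(2*(b+c)) with hX
        have key : 2*(b+c)*X = -(s+1) := by
          rw [hX]; field_simp
        have h0X : (t+a)*X^2 = 0 := by rw [← h0]; ring
        have h2 := hM X X 1
        nlinarith [h2, key, h0X]
      refine ⟨0, 2*s, by ring, ?_, ?_⟩
      · rw [psd2]; intro q z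
        have e1 : (t+a)*q^2 = 0 := by rw [← h0]; ring
        have e2 : (b+c)*(q*z) = 0 := by rw [hbc]; ring
        nlinarith [e1, e2]
      · rw [psd2]; intro q z; nlinarith [hM (q/2) (-q/2) z]
    · -- t + a > 0
      refine ⟨(b+c)^2/(t+a), 2*s - (b+c)^2/(t+a), by ring, ?_, ?_⟩
      · rw [psd2]; intro q z
        have hu : (t+a) * ((b+c)^2/(t+a)) = (b+c)^2 := by field_simp
        nlinarith [sq_nonneg ((t+a)*q + (b+c)*z), hu, hpos]
      · rw [psd2]; intro q z
        have hu : (t+a) * ((b+c)^2/(t+a)) = (b+c)^2 := by field_simp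
        have hm := hM ((t+a)*q - (b+c)*z) (-(t+a)*q - (b+c)*z) (2*(t+a)*z)
        have key : 0 ≤ (t+a)*((t - a) * q ^ 2 + 2 * (b - c) * q * z +
            (2 * s - (b + c) ^ 2 / (t + a)) * z ^ 2) := by
          have expand : (t+a)*((t - a) * q ^ 2 + 2 * (b - c) * q * z +
              (2 * s - (b + c) ^ 2 / (t + a)) * z ^ 2)
              = (t+a)*(t-a)*q^2 + 2*(t+a)*(b-c)*q*z + 2*s*(t+a)*z^2
                - ((t+a)*((b+c)^2/(t+a)))*z^2 := by ring
          rw [expand, hu]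
          nlinarith [hm, hpos]
        exact (mul_nonneg_iff_of_pos_left hpos).mp key
  · rintro ⟨u, v, huv, h1, h2⟩
    rw [psd2] at h1 h2
    intro x y z
    nlinarith [h1 (x+y) z, h2 (x-y) z, huv]
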